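/- Let V ∈ L¹[0,1] and let y solve -y'' + V y = 0 with y(0)=0, y'(0)=1. Then for all t ∈ [0,1], |y(t) - t| ≤ Σ_{m=0}^∞ t^{m+2}/(m+2)^{m+2} · (∫₀ᵗ |V(s)| ds)^{m+1}. -/

import Mathlib

open MeasureTheory Set intervalIntegral Real Function Filter Topology

lemma amgm_aux (k : ℕ) (hk : 1 ≤ k) {s t : ℝ} (hs : 0 ≤ s) (hst : s ≤ t) :
    (t - s) * s ^ k ≤ (k : ℝ) ^ k * t ^ (k + 1) / ((k : ℝ) + 1) ^ (k + 1) := by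
  have hkpos : (0:ℝ) < (k:ℝ) := by exact_mod_cast hk
  have hk1 : (0:ℝ) < (k:ℝ) + 1 := by positivity
  have ha0 : (0:ℝ) ≤ t - s := by linarith
  have hw : 1/((k:ℝ)+1) + (k:ℝ)/((k:ℝ)+1) = 1 := by field_simp; ring
  have key := Real.geom_mean_le_arith_mean2_weighted
    (w₁ := 1/((k:ℝ)+1)) (w₂ := (k:ℝ)/((k:ℝ)+1))
    (p₁ := ((k:ℝ)+1) * (t - s)) (p₂ := (((k:ℝ)+1)/(k:ℝ)) * s)
    (by positivity) (by positivity) (by positivity) (by positivity) hw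
  have hsum : 1/((k:ℝ)+1) * (((k:ℝ)+1) * (t - s)) + (k:ℝ)/((k:ℝ)+1) * ((((k:ℝ)+1)/(k:ℝ)) * s) = t := by
    field_simp
    ring
  rw [hsum] at key
  have ht0 : (0:ℝ) ≤ t := hs.trans hst
  have h2 : ((((k:ℝ)+1) * (t - s)) ^ (1/((k:ℝ)+1)) * ((((k:ℝ)+1)/(k:ℝ)) * s) ^ ((k:ℝ)/((k:ℝ)+1))) ^ (k+1) ≤ t ^ (k+1) :=
    pow_le_pow_left₀ (by positivity) key (k+1)
  rw [mul_pow] at h2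
  have e1 : ((((k:ℝ)+1) * (t - s)) ^ (1/((k:ℝ)+1))) ^ (k+1) = ((k:ℝ)+1) * (t - s) := by
    rw [← Real.rpow_natCast (_ ^ (1/((k:ℝ)+1))) (k+1), ← Real.rpow_mul (by positivity)]
    push_cast
    rw [one_div_mul_cancel (by positivity), Real.rpow_one]
  have e2 : (((((k:ℝ)+1)/(k:ℝ)) * s) ^ ((k:ℝ)/((k:ℝ)+1))) ^ (k+1) = ((((k:ℝ)+1)/(k:ℝ)) * s) ^ k := by
    rw [← Real.rpow_natCast (_ ^ ((k:ℝ)/((k:ℝ)+1))) (k+1), ← Real.rpow_mul (by positivity)]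
    rw [show (k:ℝ)/((k:ℝ)+1) * ((k+1:ℕ):ℝ) = ((k:ℕ):ℝ) by push_cast; field_simp]
    rw [Real.rpow_natCast]
  rw [e1, e2] at h2
  have e3 : ((k:ℝ)+1) * (t - s) * ((((k:ℝ)+1)/(k:ℝ)) * s) ^ k * (k:ℝ)^k
      = ((k:ℝ)+1)^(k+1) * ((t - s) * s^k) := by
    rw [mul_pow, div_pow]
    field_simp
    ring
  have h3 : ((k:ℝ)+1)^(k+1) * ((t - s) * s^k) ≤ t^(k+1) * (k:ℝ)^k := by
    rw [← e3]
    exact mul_le_mul_of_nonneg_right h2 (by positivity)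
  rw [le_div_iff₀ (by positivity)]
  nlinarith [h3]

lemma step_bound (k : ℕ) (hk : 1 ≤ k) {s t Qs Qt : ℝ} (hs : 0 ≤ s) (hst : s ≤ t)
    (hQs : 0 ≤ Qs) (hQQ : Qs ≤ Qt) (j : ℕ) :
    (t - s) * (s ^ k / ((k:ℝ)) ^ k * Qs ^ j) ≤ t ^ (k+1) / ((k:ℝ)+1) ^ (k+1) * Qt ^ j := by
  have hkpos : (0:ℝ) < (k:ℝ) := by exact_mod_cast hk
  have h1 := amgm_aux k hk hs hst
  have h2 : Qs ^ j ≤ Qt ^ j := pow_le_pow_left₀ hQs hQQ j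
  have ht0 : (0:ℝ) ≤ t := hs.trans hst
  calc (t - s) * (s ^ k / ((k:ℝ)) ^ k * Qs ^ j)
      = ((t - s) * s ^ k) / ((k:ℝ)) ^ k * Qs ^ j := by ring
    _ ≤ (((k:ℝ)) ^ k * t ^ (k+1) / ((k:ℝ)+1) ^ (k+1)) / ((k:ℝ)) ^ k * Qt ^ j := by
        refine mul_le_mul ?_ h2 (pow_nonneg hQs j) (by positivity)
        exact div_le_div_of_nonneg_right h1 (by positivity) |>.trans_eq rfl
    _ = t ^ (k+1) / ((k:ℝ)+1) ^ (k+1) * Qt ^ j := by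
        field_simp

lemma kernel_swap {h : ℝ → ℝ} (hh : IntegrableOn h (Icc 0 1)) {t : ℝ}
    (ht0 : 0 ≤ t) (ht1 : t ≤ 1) :
    ∫ u in (0:ℝ)..t, (∫ s in (0:ℝ)..u, h s) = ∫ s in (0:ℝ)..t, (t - s) * h s := by
  have hmeas : MeasurableSet (Ioc (0:ℝ) t) := measurableSet_Ioc
  have hsub : Ioc (0:ℝ) t ⊆ Icc 0 1 := fun x hx => ⟨hx.1.le, hx.2.trans ht1⟩
  have hhIoc : IntegrableOn h (Ioc 0 t) := hh.mono_set hsub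
  set μ := volume.restrict (Ioc (0:ℝ) t) with hμ
  have hS : MeasurableSet {p : ℝ × ℝ | p.2 ≤ p.1} := measurableSet_le measurable_snd measurable_fst
  set F : ℝ × ℝ → ℝ := ({p : ℝ × ℝ | p.2 ≤ p.1}).indicator (fun p => h p.2) with hF
  have h1 : Integrable (fun p : ℝ × ℝ => (1:ℝ) * h p.2) (μ.prod μ) :=
    Integrable.mul_prod (integrableOn_const (C := (1:ℝ)) measure_Ioc_lt_top.ne : Integrable (fun _ => (1:ℝ)) μ) hhIoc
  simp only [one_mul] at h1
  have hint : Integrable F (μ.prod μ) := h1.indicator hS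
  have huncurry : Integrable (uncurry fun u s => F (u, s)) (μ.prod μ) := hint
  calc ∫ u in (0:ℝ)..t, (∫ s in (0:ℝ)..u, h s)
      = ∫ u in Ioc (0:ℝ) t, (∫ s in (0:ℝ)..u, h s) := integral_of_le ht0
    _ = ∫ u in Ioc (0:ℝ) t, (∫ s in Ioc (0:ℝ) t, F (u, s)) := by
        refine setIntegral_congr_fun hmeas (fun u hu => ?_)
        have e1 : (fun s => F (u, s)) = (Iic u).indicator h := by
          funext s
          by_cases hsu : s ≤ u
          · simp [hF, indicator_of_mem, hsu, mem_Iic.2 hsu, Set.indicator_of_mem]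
          · simp [hF, Set.indicator_of_notMem, hsu, mem_Iic, not_le.2 (not_le.1 hsu)]
        rw [e1, setIntegral_indicator measurableSet_Iic,
          show Ioc 0 t ∩ Iic u = Ioc 0 u from by
            ext x; simp only [mem_inter_iff, mem_Iic, mem_Ioc]
            exact ⟨fun ⟨⟨h1, h2⟩, h3⟩ => ⟨h1, h3⟩, fun ⟨h1, h2⟩ => ⟨⟨h1, h2.trans hu.2⟩, h2⟩⟩,
          integral_of_le hu.1.le]
    _ = ∫ s in Ioc (0:ℝ) t, (∫ u in Ioc (0:ℝ) t, F (u, s)) :=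
        integral_integral_swap huncurry
    _ = ∫ s in Ioc (0:ℝ) t, (t - s) * h s := by
        refine setIntegral_congr_fun hmeas (fun s hs => ?_)
        have e2 : (fun u => F (u, s)) = (Ici s).indicator (fun _ => h s) := by
          funext u
          by_cases hsu : s ≤ u
          · simp [hF, Set.indicator_of_mem, hsu, mem_Ici.2 hsu]
          · simp [hF, Set.indicator_of_notMem, hsu, mem_Ici]
        rw [e2, setIntegral_indicator measurableSet_Ici,
          show Ioc 0 t ∩ Ici s = Icc s t from by
            ext x; simp only [mem_inter_iff, mem_Ici, mem_Ioc, mem_Icc]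
            exact ⟨fun ⟨⟨h1, h2⟩, h3⟩ => ⟨h3, h2⟩, fun ⟨h1, h2⟩ => ⟨⟨hs.1.trans_le h1, h2⟩, h1⟩⟩,
          setIntegral_const]
        rw [Real.volume_real_Icc_of_le hs.2]
        simp [smul_eq_mul]
    _ = ∫ s in (0:ℝ)..t, (t - s) * h s := (integral_of_le ht0).symm

theorem pointwise_bound_solution
    (V y : ℝ → ℝ)
    (hV : IntegrableOn V (Icc 0 1))
    (hy0 : y 0 = 0)
    (hy : ∀ t ∈ Icc (0:ℝ) 1,
      HasDerivWithinAt y (1 + ∫ s in (0:ℝ)..t, V s * y s) (Icc (0:ℝ) 1) t) :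
    ∀ t ∈ Icc (0:ℝ) 1,
      |y t - t| ≤ ∑' m : ℕ,
        t ^ (m + 2) / ((m + 2 : ℝ)) ^ (m + 2) * (∫ s in (0:ℝ)..t, |V s|) ^ (m + 1) := by
  -- continuity and boundedness of y
  have hycont : ContinuousOn y (Icc 0 1) := fun x hx => (hy x hx).continuousWithinAt
  obtain ⟨K, hK⟩ := isCompact_Icc.exists_bound_of_continuousOn hycont
  have hKy : ∀ s ∈ Icc (0:ℝ) 1, |y s| ≤ K := fun s hs => by
    simpa [Real.norm_eq_abs] using hK s hs
  have hK0 : 0 ≤ K := (abs_nonneg _).trans (hKy 0 ⟨le_rfl, zero_le_one⟩)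
  -- integrability of V * y
  have hVy : IntegrableOn (fun s => V s * y s) (Icc 0 1) := by
    have h1 : IntegrableOn (fun s => y s * V s) (Icc 0 1) :=
      hV.bdd_mul (hycont.aestronglyMeasurable measurableSet_Icc)
        ((ae_restrict_iff' measurableSet_Icc).2 (Eventually.of_forall fun x hx => by
          simpa [Real.norm_eq_abs] using hKy x hx))
    exact h1.congr_fun (fun x _ => mul_comm (y x) (V x)) measurableSet_Icc
  have hVabs : IntegrableOn (fun s => |V s|) (Icc 0 1) := hV.abs
  -- Q and its properties
  set Q : ℝ → ℝ := fun r => ∫ s in (0:ℝ)..r, |V s| with hQdef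
  have hVii : ∀ a b : ℝ, a ∈ Icc (0:ℝ) 1 → b ∈ Icc (0:ℝ) 1 →
      IntervalIntegrable (fun s => |V s|) volume a b := fun a b ha hb =>
    (hVabs.mono_set (uIcc_subset_Icc ha hb)).intervalIntegrable
  have hQnonneg : ∀ r ∈ Icc (0:ℝ) 1, 0 ≤ Q r := fun r hr =>
    intervalIntegral.integral_nonneg hr.1 (fun x _ => abs_nonneg _)
  have hQmono : ∀ a b : ℝ, a ∈ Icc (0:ℝ) 1 → b ∈ Icc (0:ℝ) 1 → a ≤ b → Q a ≤ Q b := by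
    intro a b ha hb hab
    have h1 := intervalIntegral.integral_add_adjacent_intervals
      (hVii 0 a ⟨le_rfl, zero_le_one⟩ ha) (hVii a b ha hb)
    have h2 : 0 ≤ ∫ s in a..b, |V s| :=
      intervalIntegral.integral_nonneg hab (fun x _ => abs_nonneg _)
    simp only [hQdef]
    linarith [h1, h2]
  -- integral identity
  have hinteq : ∀ t ∈ Icc (0:ℝ) 1, y t - t = ∫ s in (0:ℝ)..t, (t - s) * (V s * y s) := by
    intro t ht
    have hgcont : ContinuousOn (fun u => ∫ s in (0:ℝ)..u, V s * y s) (Icc 0 1) := by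
      have := intervalIntegral.continuousOn_primitive_interval
        (a := 0) (b := 1) (μ := volume) (f := fun s => V s * y s)
        (by rwa [uIcc_of_le zero_le_one])
      rwa [uIcc_of_le zero_le_one] at this
    have hgii : IntervalIntegrable (fun u => 1 + ∫ s in (0:ℝ)..u, V s * y s) volume 0 t := by
      apply ContinuousOn.intervalIntegrable
      rw [uIcc_of_le ht.1]
      exact continuousOn_const.add (hgcont.mono (Icc_subset_Icc le_rfl ht.2))
    have hFTC : (∫ u in (0:ℝ)..t, (1 + ∫ s in (0:ℝ)..u, V s * y s)) = y t - y 0 := by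
      refine integral_eq_sub_of_hasDeriv_right_of_le ht.1
        (hycont.mono (Icc_subset_Icc le_rfl ht.2)) (fun x hx => ?_) hgii
      have hx01 : x ∈ Icc (0:ℝ) 1 := ⟨hx.1.le, hx.2.le.trans ht.2⟩
      refine (hy x hx01).mono_of_mem_nhdsWithin ?_
      rw [mem_nhdsWithin]
      exact ⟨Iio 1, isOpen_Iio, lt_of_lt_of_le hx.2 ht.2,
        fun u hu => ⟨(hx.1.trans hu.2).le, hu.1.le⟩⟩
    have hgii' : IntervalIntegrable (fun u => ∫ s in (0:ℝ)..u, V s * y s) volume 0 t := by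
      apply ContinuousOn.intervalIntegrable
      rw [uIcc_of_le ht.1]
      exact hgcont.mono (Icc_subset_Icc le_rfl ht.2)
    rw [intervalIntegral.integral_add intervalIntegrable_const hgii',
      intervalIntegral.integral_const, hy0, sub_zero, smul_eq_mul, mul_one, sub_zero] at hFTC
    have := kernel_swap hVy ht.1 ht.2
    rw [this] at hFTC
    linarith [hFTC]
  -- key estimate
  have key : ∀ t ∈ Icc (0:ℝ) 1, ∀ c : ℝ, (∀ s ∈ Icc 0 t, (t - s) * |y s| ≤ c) →
      |y t - t| ≤ c * Q t := by
    intro t ht c hc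
    have hsub : Icc (0:ℝ) t ⊆ Icc 0 1 := Icc_subset_Icc le_rfl ht.2
    have h2 : IntegrableOn (fun s => V s * y s) (Icc 0 t) := hVy.mono_set hsub
    have h3 : IntegrableOn (fun s => (t - s) * (V s * y s)) (Icc 0 t) :=
      h2.bdd_mul (c := t) ((continuous_const.sub continuous_id).aestronglyMeasurable)
        ((ae_restrict_iff' measurableSet_Icc).2 (Eventually.of_forall fun x hx => by
          rw [Real.norm_eq_abs, abs_of_nonneg (by linarith [hx.2] : (0:ℝ) ≤ t - x)]
          linarith [hx.1]))
    have hii : IntervalIntegrable (fun s => (t - s) * (V s * y s)) volume 0 t :=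
      (h3.mono_set (by rw [uIcc_of_le ht.1])).intervalIntegrable
    have h1 : |∫ s in (0:ℝ)..t, (t - s) * (V s * y s)| ≤
        ∫ s in (0:ℝ)..t, |(t - s) * (V s * y s)| :=
      intervalIntegral.abs_integral_le_integral_abs ht.1
    have h4 : (∫ s in (0:ℝ)..t, |(t - s) * (V s * y s)|) ≤ ∫ s in (0:ℝ)..t, c * |V s| := by
      refine intervalIntegral.integral_mono_on ht.1 hii.abs
        ((hVii 0 t ⟨le_rfl, zero_le_one⟩ ⟨ht.1, ht.2⟩).const_mul c) (fun s hs => ?_)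
      have hys : (t - s) * |y s| ≤ c := hc s hs
      have : |(t - s) * (V s * y s)| = ((t - s) * |y s|) * |V s| := by
        rw [abs_mul, abs_mul, abs_of_nonneg (by linarith [hs.2] : (0:ℝ) ≤ t - s)]
        ring
      rw [this]
      exact mul_le_mul_of_nonneg_right hys (abs_nonneg _)
    rw [hinteq t ht]
    calc |∫ s in (0:ℝ)..t, (t - s) * (V s * y s)| ≤ ∫ s in (0:ℝ)..t, |(t - s) * (V s * y s)| := h1
      _ ≤ ∫ s in (0:ℝ)..t, c * |V s| := h4
      _ = c * Q t := intervalIntegral.integral_const_mul c _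
  -- main induction
  have main : ∀ n : ℕ, ∀ t ∈ Icc (0:ℝ) 1,
      |y t - t| ≤ (∑ m ∈ Finset.range n, t ^ (m+2) / ((m:ℝ)+2) ^ (m+2) * Q t ^ (m+1))
        + K * (t ^ (n+1) / ((n:ℝ)+1) ^ (n+1) * Q t ^ (n+1)) := by
    intro n
    induction n with
    | zero =>
      intro t ht
      have h := key t ht (t * K) (fun s hs => by
        have h1 := hKy s ⟨hs.1, hs.2.trans ht.2⟩
        have h2 : (0:ℝ) ≤ t - s := by linarith [hs.2]
        nlinarith [abs_nonneg (y s), hs.1])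
      refine h.trans (le_of_eq ?_)
      norm_num
      ring
    | succ n ih =>
      intro t ht
      have hQt0 : 0 ≤ Q t := hQnonneg t ht
      set c := t^2 / (2:ℝ)^2
        + (∑ m ∈ Finset.range n, t ^ (m+3) / ((m:ℝ)+3) ^ (m+3) * Q t ^ (m+1))
        + K * (t ^ (n+2) / ((n:ℝ)+2) ^ (n+2) * Q t ^ (n+1)) with hc
      have hb : ∀ s ∈ Icc 0 t, (t - s) * |y s| ≤ c := by
        intro s hs
        have hs01 : s ∈ Icc (0:ℝ) 1 := ⟨hs.1, hs.2.trans ht.2⟩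
        have hts : (0:ℝ) ≤ t - s := by linarith [hs.2]
        have hQs0 : 0 ≤ Q s := hQnonneg s hs01
        have hQst : Q s ≤ Q t := hQmono s t hs01 ht hs.2
        have hy1 : |y s| ≤ s + |y s - s| := by
          have := abs_sub_abs_le_abs_sub (y s) s
          rw [abs_of_nonneg hs.1] at this
          linarith
        have hih := ih s hs01
        -- term bounds
        have hb0 : (t - s) * s ≤ t^2 / (2:ℝ)^2 := by
          have h0 := step_bound 1 le_rfl hs.1 hs.2 hQt0 le_rfl 0
          norm_num at h0
          linarith [h0]
        have hbsum : (t - s) * (∑ m ∈ Finset.range n, s ^ (m+2) / ((m:ℝ)+2) ^ (m+2) * Q s ^ (m+1))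
            ≤ ∑ m ∈ Finset.range n, t ^ (m+3) / ((m:ℝ)+3) ^ (m+3) * Q t ^ (m+1) := by
          rw [Finset.mul_sum]
          refine Finset.sum_le_sum (fun m _ => ?_)
          have := step_bound (m+2) (by omega) hs.1 hs.2 hQs0 hQst (m+1)
          push_cast at this ⊢
          convert this using 3
          · rfl
          · push_cast; ring
        have hberr : (t - s) * (K * (s ^ (n+1) / ((n:ℝ)+1) ^ (n+1) * Q s ^ (n+1)))
            ≤ K * (t ^ (n+2) / ((n:ℝ)+2) ^ (n+2) * Q t ^ (n+1)) := by
          have h5 := step_bound (n+1) (by omega) hs.1 hs.2 hQs0 hQst (n+1)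
          push_cast at h5
          calc (t - s) * (K * (s ^ (n+1) / ((n:ℝ)+1) ^ (n+1) * Q s ^ (n+1)))
              = K * ((t - s) * (s ^ (n+1) / ((n:ℝ)+1) ^ (n+1) * Q s ^ (n+1))) := by ring
            _ ≤ K * (t ^ (n+2) / ((n:ℝ)+2) ^ (n+2) * Q t ^ (n+1)) := by
                refine mul_le_mul_of_nonneg_left ?_ hK0
                convert h5 using 2
                · rfl
                · push_cast; ring_nf
        calc (t - s) * |y s| ≤ (t - s) * (s + |y s - s|) :=
              mul_le_mul_of_nonneg_left hy1 hts
          _ ≤ (t - s) * s + (t - s) * ((∑ m ∈ Finset.range n, s ^ (m+2) / ((m:ℝ)+2) ^ (m+2) * Q s ^ (m+1))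
                + K * (s ^ (n+1) / ((n:ℝ)+1) ^ (n+1) * Q s ^ (n+1))) := by
              rw [mul_add]
              exact add_le_add_right (mul_le_mul_of_nonneg_left hih hts) _
          _ ≤ t^2 / (2:ℝ)^2 + ((∑ m ∈ Finset.range n, t ^ (m+3) / ((m:ℝ)+3) ^ (m+3) * Q t ^ (m+1))
                + K * (t ^ (n+2) / ((n:ℝ)+2) ^ (n+2) * Q t ^ (n+1))) := by
              rw [mul_add]
              exact add_le_add hb0 (add_le_add hbsum hberr)
          _ = c := by rw [hc]; ring
      refine (key t ht c hb).trans (le_of_eq ?_)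
      rw [hc, Finset.sum_range_succ']
      rw [add_mul, add_mul, Finset.sum_mul]
      have e1 : ∀ m ∈ Finset.range n,
          t ^ (m+3) / ((m:ℝ)+3) ^ (m+3) * Q t ^ (m+1) * Q t
          = t ^ ((m+1)+2) / (((m+1:ℕ):ℝ)+2) ^ ((m+1)+2) * Q t ^ ((m+1)+1) := by
        intro m _
        push_cast
        ring
      rw [Finset.sum_congr rfl e1]
      push_cast
      ring
  -- pass to the limit
  intro t ht
  have hQt0 : 0 ≤ Q t := hQnonneg t ht
  set Q1 : ℝ := Q 1 with hQ1def
  have hQ10 : 0 ≤ Q1 := hQnonneg 1 ⟨zero_le_one, le_rfl⟩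
  have hQtQ1 : Q t ≤ Q1 := hQmono t 1 ht ⟨zero_le_one, le_rfl⟩ ht.2
  have hterm_le : ∀ m : ℕ, t ^ (m+2) / ((m:ℝ)+2) ^ (m+2) * Q t ^ (m+1)
      ≤ (Q1 + 1) ^ (m+2) / ((m+2).factorial : ℝ) := by
    intro m
    have ht1 : t ^ (m+2) ≤ 1 := pow_le_one₀ ht.1 ht.2
    have hQ : Q t ^ (m+1) ≤ (Q1 + 1) ^ (m+2) := by
      calc Q t ^ (m+1) ≤ (Q1 + 1) ^ (m+1) :=
            pow_le_pow_left₀ hQt0 (by linarith) (m+1)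
        _ ≤ (Q1 + 1) ^ (m+2) := pow_le_pow_right₀ (by linarith) (by omega)
    have hfact : ((m+2).factorial : ℝ) ≤ ((m:ℝ)+2) ^ (m+2) := by
      have := Nat.factorial_le_pow (m+2)
      calc ((m+2).factorial : ℝ) ≤ (((m+2) ^ (m+2) : ℕ) : ℝ) := by exact_mod_cast this
        _ = ((m:ℝ)+2) ^ (m+2) := by push_cast; ring
    rw [div_mul_eq_mul_div]
    refine div_le_div₀ (by positivity) ?_ (by positivity) hfact
    calc t ^ (m+2) * Q t ^ (m+1) ≤ 1 * ((Q1 + 1) ^ (m+2)) :=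
          mul_le_mul ht1 hQ (pow_nonneg hQt0 _) zero_le_one
      _ = (Q1 + 1) ^ (m+2) := one_mul _
  have hcompsum : Summable (fun m : ℕ => (Q1 + 1) ^ (m+2) / ((m+2).factorial : ℝ)) :=
    (Real.summable_pow_div_factorial (Q1 + 1)).comp_injective (add_left_injective 2)
  have hsummable : Summable (fun m : ℕ => t ^ (m+2) / ((m:ℝ)+2) ^ (m+2) * Q t ^ (m+1)) :=
    Summable.of_nonneg_of_le (fun m => mul_nonneg (div_nonneg (pow_nonneg ht.1 _) (by positivity)) (pow_nonneg hQt0 _)) hterm_le hcompsum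
  have herr : Tendsto (fun n : ℕ => K * (t ^ (n+1) / ((n:ℝ)+1) ^ (n+1) * Q t ^ (n+1)))
      atTop (𝓝 0) := by
    have hbd : ∀ n : ℕ, K * (t ^ (n+1) / ((n:ℝ)+1) ^ (n+1) * Q t ^ (n+1))
        ≤ K * ((Q1 + 1) ^ (n+1) / ((n+1).factorial : ℝ)) := by
      intro n
      refine mul_le_mul_of_nonneg_left ?_ hK0
      have ht1 : t ^ (n+1) ≤ 1 := pow_le_one₀ ht.1 ht.2
      have hQ : Q t ^ (n+1) ≤ (Q1 + 1) ^ (n+1) := pow_le_pow_left₀ hQt0 (by linarith) (n+1)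
      have hfact : ((n+1).factorial : ℝ) ≤ ((n:ℝ)+1) ^ (n+1) := by
        have := Nat.factorial_le_pow (n+1)
        calc ((n+1).factorial : ℝ) ≤ (((n+1) ^ (n+1) : ℕ) : ℝ) := by exact_mod_cast this
          _ = ((n:ℝ)+1) ^ (n+1) := by push_cast; ring
      rw [div_mul_eq_mul_div]
      refine div_le_div₀ (by positivity) ?_ (by positivity) hfact
      calc t ^ (n+1) * Q t ^ (n+1) ≤ 1 * ((Q1 + 1) ^ (n+1)) :=
            mul_le_mul ht1 hQ (pow_nonneg hQt0 _) zero_le_one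
        _ = (Q1 + 1) ^ (n+1) := one_mul _
    have hg : Tendsto (fun n : ℕ => K * ((Q1 + 1) ^ (n+1) / ((n+1).factorial : ℝ)))
        atTop (𝓝 0) := by
      have h1 : Summable (fun n : ℕ => (Q1 + 1) ^ (n+1) / ((n+1).factorial : ℝ)) :=
        (Real.summable_pow_div_factorial (Q1 + 1)).comp_injective (add_left_injective 1)
      have := h1.tendsto_atTop_zero.const_mul K
      simpa using this
    exact squeeze_zero (fun n => mul_nonneg hK0 (mul_nonneg (div_nonneg (pow_nonneg ht.1 _) (by positivity)) (pow_nonneg hQt0 _))) hbd hg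
  have hlim : Tendsto (fun n : ℕ => (∑' m : ℕ, t ^ (m+2) / ((m:ℝ)+2) ^ (m+2) * Q t ^ (m+1))
      + K * (t ^ (n+1) / ((n:ℝ)+1) ^ (n+1) * Q t ^ (n+1))) atTop
      (𝓝 (∑' m : ℕ, t ^ (m+2) / ((m:ℝ)+2) ^ (m+2) * Q t ^ (m+1))) := by
    have := (tendsto_const_nhds (x := ∑' m : ℕ, t ^ (m+2) / ((m:ℝ)+2) ^ (m+2) * Q t ^ (m+1))
      (f := atTop (α := ℕ))).add herr
    rwa [add_zero] at this
  refine ge_of_tendsto' hlim (fun n => ?_)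
  have h1 := main n t ht
  have h2 : (∑ m ∈ Finset.range n, t ^ (m+2) / ((m:ℝ)+2) ^ (m+2) * Q t ^ (m+1))
      ≤ ∑' m : ℕ, t ^ (m+2) / ((m:ℝ)+2) ^ (m+2) * Q t ^ (m+1) :=
    Summable.sum_le_tsum _ (fun i _ => mul_nonneg (div_nonneg (pow_nonneg ht.1 _) (by positivity)) (pow_nonneg hQt0 _)) hsummable
  have h3 : (∑' m : ℕ, t ^ (m+2) / ((m:ℝ)+2) ^ (m+2) * Q t ^ (m+1))
      = ∑' m : ℕ, t ^ (m+2) / ((m + 2 : ℝ)) ^ (m+2) * (∫ s in (0:ℝ)..t, |V s|) ^ (m+1) := by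
    refine tsum_congr (fun m => ?_)
    push_cast
    rfl
  rw [← h3]
  linarith [h1, h2]
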